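/- arXiv:2309.06087 — 7 statements merged into one kernel-verified Lean document; each statement's English description precedes it below -/
import Mathlib

section
/- Let n > c ≥ 4 and c ≥ s ≥ 3 be integers, write n - 1 = α(c-1) + p with α = ⌊(n-1)/(c-1)⌋ and 0 ≤ p ≤ c-2. Then max{C(c-1,s) + (n-c+1)·C(2,s-1), C(c+1-⌊c/2⌋,s) + (n-c-1+⌊c/2⌋)·C(⌊c/2⌋,s-1)} < α·C(c,s) + C(p+1,s). -/
lemma vdm (m t : ℕ) :
    Nat.choose m (t+3) + 2 * m * Nat.choose m (t+2) ≤ Nat.choose (m+m) (t+3) := by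
  rw [Nat.add_choose_eq]
  have hne1 : ((0, t+3) : ℕ×ℕ) ≠ (1, t+2) := by simp
  have hne2 : ((0, t+3) : ℕ×ℕ) ≠ (t+2, 1) := by simp
  have hne3 : ((1, t+2) : ℕ×ℕ) ≠ (t+2, 1) := by
    intro h; injection h with h1 h2; omega
  have hsub : ({(0, t+3), (1, t+2), (t+2, 1)} : Finset (ℕ×ℕ)) ⊆ Finset.HasAntidiagonal.antidiagonal (t+3) := by
    intro x hx
    simp only [Finset.mem_insert, Finset.mem_singleton] at hx
    rcases hx with h|h|h <;> subst h <;> simp [Finset.mem_antidiagonal] <;> omega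
  have hsum := Finset.sum_le_sum_of_subset (f := fun ij : ℕ×ℕ => m.choose ij.1 * m.choose ij.2) hsub
  rw [Finset.sum_insert (by simp [hne1, hne2]), Finset.sum_pair hne3] at hsum
  simp only [Nat.choose_zero_right, Nat.choose_one_right, one_mul] at hsum
  linarith [hsum]

lemma pas2 (n k : ℕ) : Nat.choose (n+1) (k+2) = Nat.choose n (k+1) + Nat.choose n (k+2) :=
  Nat.choose_succ_succ n (k+1)

lemma pas3 (n k : ℕ) : Nat.choose (n+1) (k+3) = Nat.choose n (k+2) + Nat.choose n (k+3) :=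
  Nat.choose_succ_succ n (k+2)

lemma self_le_choose_two {n : ℕ} (hn : 3 ≤ n) : n ≤ Nat.choose n 2 := by
  rw [Nat.choose_two_right, Nat.le_div_iff_mul_le (by norm_num)]
  exact Nat.mul_le_mul_left n (by omega)

-- Key inequality at the "minimum" point p = m - 1
lemma need2 (m t c : ℕ) (hm : 2 ≤ m) (hc : c = m + m ∨ c = m + m + 1) (hsc : t + 3 ≤ c) :
    Nat.choose (c+1-m) (t+3) + ((m-1)+(m-1)) * Nat.choose m (t+2)
      < Nat.choose c (t+3) + Nat.choose m (t+3) := by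
  have hv := vdm m t
  rcases hc with rfl | rfl
  · -- even
    have hx : m + m + 1 - m = m + 1 := by omega
    rw [hx, pas3 m t]
    rcases Nat.eq_zero_or_pos (Nat.choose m (t+2)) with hD | hD
    · have hpos : 0 < Nat.choose (m+m) (t+3) := Nat.choose_pos hsc
      simp [hD]; omega
    · have h1 : (1 + ((m-1)+(m-1))) * Nat.choose m (t+2) < 2 * m * Nat.choose m (t+2) :=
        Nat.mul_lt_mul_of_lt_of_le (by omega) le_rfl (by omega)
      have h2 : Nat.choose m (t+2) + ((m-1)+(m-1)) * Nat.choose m (t+2)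
          = (1 + ((m-1)+(m-1))) * Nat.choose m (t+2) := by ring
      omega
  · -- odd
    have hx : m + m + 1 + 1 - m = m + 2 := by omega
    rw [hx]
    have e1 : Nat.choose (m+2) (t+3)
        = Nat.choose m (t+1) + Nat.choose m (t+2) + (Nat.choose m (t+2) + Nat.choose m (t+3)) := by
      rw [show m+2 = (m+1)+1 from rfl, pas3 (m+1) t, pas2 m t, pas3 m t]
    have e2 : Nat.choose (m+m+1) (t+3) = Nat.choose (m+m) (t+2) + Nat.choose (m+m) (t+3) :=
      pas3 (m+m) t
    rw [e1, e2]
    rcases Nat.eq_zero_or_pos (Nat.choose m (t+2)) with hD | hD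
    · -- need C(m,t+1) < C(m+m,t+2) + C(m+m,t+3)
      have ht2 : 0 < Nat.choose (m+m) (t+2) := Nat.choose_pos (by omega)
      rcases le_or_gt (t+1) m with htm | htm
      · have htm' : t + 1 = m := by
          by_contra h
          have h2 : t + 2 ≤ m := by omega
          have := Nat.choose_pos (n := m) (k := t+2) h2
          omega
        have h2 : 1 ≤ Nat.choose (m+m) (t+3) := Nat.choose_pos (by omega)
        have h3 : Nat.choose m (t+1) = 1 := by rw [← htm']; exact Nat.choose_self _
        simp [hD]; omega
      · rw [Nat.choose_eq_zero_of_lt htm]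
        simp [hD]; omega
    · -- D ≥ 1
      have ht2m : t + 2 ≤ m := by
        by_contra h
        rw [Nat.choose_eq_zero_of_lt (by omega)] at hD; omega
      have h1 : Nat.choose m (t+1) + Nat.choose m (t+2) < Nat.choose (m+m) (t+2) := by
        calc Nat.choose m (t+1) + Nat.choose m (t+2) = Nat.choose (m+1) (t+2) := (pas2 m t).symm
          _ < Nat.choose (m+1) (t+1) + Nat.choose (m+1) (t+2) := by
              have : 0 < Nat.choose (m+1) (t+1) := Nat.choose_pos (by omega)
              omega
          _ = Nat.choose (m+2) (t+2) := by
              rw [show m+2 = (m+1)+1 from rfl, pas2 (m+1) t]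
          _ ≤ Nat.choose (m+m) (t+2) := Nat.choose_le_choose _ (by omega)
      have h2 : 2 * m * Nat.choose m (t+2) ≤ Nat.choose (m+m) (t+3) :=
        le_trans (Nat.le_add_left _ _) hv
      have h3 : Nat.choose m (t+2) + ((m-1)+(m-1)) * Nat.choose m (t+2)
          ≤ 2 * m * Nat.choose m (t+2) := by
        have h4 : (1 + ((m-1)+(m-1))) * Nat.choose m (t+2) ≤ 2 * m * Nat.choose m (t+2) :=
          Nat.mul_le_mul_right _ (by omega)
        linarith [h4]
      omega

-- the inequality for all p (convexity in p, minimum at p = m-1)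
lemma S_all (m t c : ℕ) (hm : 2 ≤ m) (hc : c = m + m ∨ c = m + m + 1) (hsc : t + 3 ≤ c) :
    ∀ q : ℕ, Nat.choose (c+1-m) (t+3) + (q + (m-1)) * Nat.choose m (t+2)
      < Nat.choose c (t+3) + Nat.choose (q+1) (t+3) := by
  have base : Nat.choose (c+1-m) (t+3) + ((m-1) + (m-1)) * Nat.choose m (t+2)
      < Nat.choose c (t+3) + Nat.choose ((m-1)+1) (t+3) := by
    have e : (m-1)+1 = m := by omega
    rw [e]; exact need2 m t c hm hc hsc
  have down : ∀ j : ℕ, Nat.choose (c+1-m) (t+3) + ((m-1-j) + (m-1)) * Nat.choose m (t+2)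
      < Nat.choose c (t+3) + Nat.choose ((m-1-j)+1) (t+3) := by
    intro j
    induction j with
    | zero => simpa using base
    | succ j ih =>
      rcases Nat.lt_or_ge j (m-1) with h | h
      swap
      · have e : m-1-(j+1) = m-1-j := by omega
        rw [e]; exact ih
      · have hpe : m-1-j = (m-1-(j+1)) + 1 := by omega
        set q := m-1-(j+1) with hq
        rw [hpe] at ih
        have hle : Nat.choose (q+1) (t+2) ≤ Nat.choose m (t+2) :=
          Nat.choose_le_choose _ (by omega)
        have hpas : Nat.choose (q+1+1) (t+3) = Nat.choose (q+1) (t+2) + Nat.choose (q+1) (t+3) :=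
          pas3 (q+1) t
        have hmul : (q+1 + (m-1)) * Nat.choose m (t+2)
            = (q + (m-1)) * Nat.choose m (t+2) + Nat.choose m (t+2) := by ring
        omega
  have up : ∀ q : ℕ, m-1 ≤ q → Nat.choose (c+1-m) (t+3) + (q + (m-1)) * Nat.choose m (t+2)
      < Nat.choose c (t+3) + Nat.choose (q+1) (t+3) := by
    intro q hq
    induction q, hq using Nat.le_induction with
    | base => exact base
    | succ q hq ih =>
      have hle : Nat.choose m (t+2) ≤ Nat.choose (q+1) (t+2) :=
        Nat.choose_le_choose _ (by omega)
      have hpas : Nat.choose (q+1+1) (t+3) = Nat.choose (q+1) (t+2) + Nat.choose (q+1) (t+3) :=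
        pas3 (q+1) t
      have hmul : (q+1 + (m-1)) * Nat.choose m (t+2)
          = (q + (m-1)) * Nat.choose m (t+2) + Nat.choose m (t+2) := by ring
      omega
  intro q
  rcases le_or_gt (m-1) q with h | h
  · exact up q h
  · have := down (m-1-q)
    rw [show m-1-(m-1-q) = q from by omega] at this
    exact this

-- branch B
lemma B_main (m t c β p : ℕ) (hm : 2 ≤ m) (hc : c = m + m ∨ c = m + m + 1) (hsc : t + 3 ≤ c) :
    Nat.choose (c+1-m) (t+3) + (β * (c-1) + (p + (m-1))) * Nat.choose m (t+2)
      < (β+1) * Nat.choose c (t+3) + Nat.choose (p+1) (t+3) := by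
  have need1 : (c-1) * Nat.choose m (t+2) ≤ Nat.choose c (t+3) := by
    calc (c-1) * Nat.choose m (t+2) ≤ 2 * m * Nat.choose m (t+2) :=
          Nat.mul_le_mul_right _ (by omega)
      _ ≤ Nat.choose (m+m) (t+3) := le_trans (Nat.le_add_left _ _) (vdm m t)
      _ ≤ Nat.choose c (t+3) := Nat.choose_le_choose _ (by omega)
  have hS := S_all m t c hm hc hsc p
  have h2 : β * ((c-1) * Nat.choose m (t+2)) ≤ β * Nat.choose c (t+3) :=
    Nat.mul_le_mul_left _ need1
  calc Nat.choose (c+1-m) (t+3) + (β * (c-1) + (p + (m-1))) * Nat.choose m (t+2)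
      = Nat.choose (c+1-m) (t+3) + (p + (m-1)) * Nat.choose m (t+2)
        + β * ((c-1) * Nat.choose m (t+2)) := by ring
    _ ≤ Nat.choose (c+1-m) (t+3) + (p + (m-1)) * Nat.choose m (t+2)
        + β * Nat.choose c (t+3) := by omega
    _ < (Nat.choose c (t+3) + Nat.choose (p+1) (t+3)) + β * Nat.choose c (t+3) := by omega
    _ = (β+1) * Nat.choose c (t+3) + Nat.choose (p+1) (t+3) := by ring

-- branch A
lemma A_main (c β p t : ℕ) (hc : 4 ≤ c) (hsc : t + 3 ≤ c) (hp : p ≤ c - 2) :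
    Nat.choose (c-1) (t+3) + (β * (c-1) + p + 1) * Nat.choose 2 (t+2)
      < (β+1) * Nat.choose c (t+3) + Nat.choose (p+1) (t+3) := by
  have hpas : Nat.choose c (t+3) = Nat.choose (c-1) (t+2) + Nat.choose (c-1) (t+3) := by
    rw [show c = (c-1)+1 from by omega, pas3 (c-1) t]
    congr 1
  rcases t with _ | t'
  · -- s = 3
    norm_num at hpas hsc ⊢
    have hcc : c - 1 ≤ Nat.choose (c-1) 2 := self_le_choose_two (by omega)
    have hc3 : c - 1 ≤ Nat.choose c 3 := by omega
    have hβ : β * (c-1) ≤ β * Nat.choose c 3 := Nat.mul_le_mul_left _ hc3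
    have key : p + 1 < Nat.choose (c-1) 2 + Nat.choose (p+1) 3 := by
      rcases Nat.lt_or_ge (p+1) (c-1) with h | h
      · omega
      · have hpe : p + 1 = c - 1 := by omega
        have : 0 < Nat.choose (p+1) 3 := Nat.choose_pos (by omega)
        omega
    have hexp : (β+1) * Nat.choose c 3 = β * Nat.choose c 3 + Nat.choose c 3 := by ring
    omega
  · -- s ≥ 4 : C(2, t'+3) = 0
    rw [show Nat.choose 2 (t'+1+2) = 0 from Nat.choose_eq_zero_of_lt (by omega), mul_zero, add_zero]
    have hpos : 0 < Nat.choose (c-1) (t'+1+2) := Nat.choose_pos (by omega)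
    have hY : Nat.choose c (t'+1+3) ≤ (β+1) * Nat.choose c (t'+1+3) :=
      Nat.le_mul_of_pos_left _ (by omega)
    omega

/-- Lemma 8 of the paper: for `n > c ≥ 4`, `c ≥ s ≥ 3`, writing `n - 1 = α(c-1) + p` with
`α = ⌊(n-1)/(c-1)⌋` and `0 ≤ p ≤ c-2`, we have
`max{f_s(n,c,2), f_s(n,c,⌊c/2⌋)} < h_s(n,c) = α·C(c,s) + C(p+1,s)`,
where `f_s(n,c,k) = C(c+1-k,s) + (n-c-1+k)·C(k,s-1)`. -/
theorem max_f_lt_h (n c s α p : ℕ) (hc : 4 ≤ c) (hnc : c < n) (hs : 3 ≤ s) (hsc : s ≤ c)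
    (hα : α = (n - 1) / (c - 1)) (hdecomp : n - 1 = α * (c - 1) + p) (hp : p ≤ c - 2) :
    max (Nat.choose (c - 1) s + (n - c + 1) * Nat.choose 2 (s - 1))
        (Nat.choose (c + 1 - c / 2) s + (n - c - 1 + c / 2) * Nat.choose (c / 2) (s - 1)) <
      α * Nat.choose c s + Nat.choose (p + 1) s := by
  obtain ⟨t, rfl⟩ : ∃ t, s = t + 3 := ⟨s - 3, by omega⟩
  obtain ⟨β, rfl⟩ : ∃ β, α = β + 1 := by
    cases α with
    | zero => exfalso; simp only [Nat.zero_mul, Nat.zero_add] at hdecomp; omega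
    | succ β => exact ⟨β, rfl⟩
  have hm2 : 2 ≤ c / 2 := by omega
  have hmc : c = c/2 + c/2 ∨ c = c/2 + c/2 + 1 := by omega
  have hK : n - 1 = β * (c-1) + (c-1) + p := by
    have h : (β+1)*(c-1) = β*(c-1) + (c-1) := by ring
    omega
  have e1 : n - c + 1 = β*(c-1) + p + 1 := by omega
  have e2 : n - c - 1 + c/2 = β*(c-1) + (p + (c/2 - 1)) := by omega
  have es : t + 3 - 1 = t + 2 := by omega
  rw [es, e1, e2]
  exact max_lt (A_main c β p t hc (by omega) hp) (B_main (c/2) t c β p hm2 hmc (by omega))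
end

section
/- Let n > c ≥ 4 and c ≥ s ≥ 3 be integers, write n - 1 = α(c-1) + p with α = ⌊(n-1)/(c-1)⌋ and 0 ≤ p ≤ c-2. Then C(c-1,s) + (n-c+1)·C(2,s-1) < α·C(c,s) + C(p+1,s). -/
lemma key_ineq (c p : ℕ) (hc : 4 ≤ c) (hp : p ≤ c - 2) :
    p + 1 < Nat.choose (c - 1) 2 + Nat.choose (p + 1) 3 := by
  rcases le_or_gt p 1 with h | h
  · have h3 : Nat.choose 3 2 ≤ Nat.choose (c - 1) 2 := Nat.choose_le_choose 2 (by omega)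
    norm_num [Nat.choose] at h3
    omega
  · have h1 : 0 < Nat.choose (p + 1) 3 := Nat.choose_pos (by omega)
    have h2 : Nat.choose (p + 1) 2 ≤ Nat.choose (c - 1) 2 := Nat.choose_le_choose 2 (by omega)
    have h4 : Nat.choose (p + 1) 2 = Nat.choose p 1 + Nat.choose p 2 :=
      Nat.choose_succ_succ p 1
    have h5 : 0 < Nat.choose p 2 := Nat.choose_pos (by omega)
    rw [Nat.choose_one_right] at h4
    omega

lemma le_choose_two (c : ℕ) (hc : 4 ≤ c) : c - 1 ≤ Nat.choose (c - 1) 2 := by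
  obtain ⟨d, rfl⟩ : ∃ d, c = d + 4 := ⟨c - 4, by omega⟩
  have h : d + 4 - 1 = d + 3 := by omega
  rw [h, Nat.choose_two_right, Nat.le_div_iff_mul_le (by norm_num)]
  have h2 : d + 3 - 1 = d + 2 := by omega
  rw [h2]
  nlinarith

/-- First part of the proof of Lemma 8: for `n > c ≥ 4`, `c ≥ s ≥ 3`, writing
`n - 1 = α(c-1) + p` with `α = ⌊(n-1)/(c-1)⌋` and `0 ≤ p ≤ c-2`, we have
`f_s(n,c,2) = C(c-1,s) + (n-c+1)·C(2,s-1) < α·C(c,s) + C(p+1,s) = h_s(n,c)`. -/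
theorem f2_lt_h (n c s α p : ℕ) (hc : 4 ≤ c) (hnc : c < n) (hs : 3 ≤ s) (hsc : s ≤ c)
    (hα : α = (n - 1) / (c - 1)) (hdecomp : n - 1 = α * (c - 1) + p) (hp : p ≤ c - 2) :
    Nat.choose (c - 1) s + (n - c + 1) * Nat.choose 2 (s - 1) <
      α * Nat.choose c s + Nat.choose (p + 1) s := by
  have hα1 : 1 ≤ α := by
    subst hα
    exact (Nat.one_le_div_iff (by omega)).mpr (by omega)
  clear hα
  have pascal : Nat.choose c s = Nat.choose (c-1) (s-1) + Nat.choose (c-1) s := by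
    have hc1 : c = (c - 1) + 1 := by omega
    have hs1 : s = (s - 1) + 1 := by omega
    rw [hc1, hs1]
    simpa using Nat.choose_succ_succ (c-1) (s-1)
  rcases eq_or_lt_of_le hs with h3 | h4
  · -- s = 3
    subst h3
    obtain ⟨b, rfl⟩ : ∃ b, α = b + 1 := ⟨α - 1, by omega⟩
    have hkey := key_ineq c p hc hp
    have hC2 := le_choose_two c hc
    norm_num at pascal ⊢
    obtain ⟨X1, hX1⟩ : ∃ x, Nat.choose (c-1) 3 = x := ⟨_, rfl⟩
    obtain ⟨X2, hX2⟩ : ∃ x, Nat.choose (c-1) 2 = x := ⟨_, rfl⟩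
    obtain ⟨X3, hX3⟩ : ∃ x, Nat.choose c 3 = x := ⟨_, rfl⟩
    obtain ⟨X4, hX4⟩ : ∃ x, Nat.choose (p+1) 3 = x := ⟨_, rfl⟩
    rw [hX2, hX4] at hkey
    rw [hX2] at hC2
    rw [hX1, hX2, hX3] at pascal
    rw [hX1, hX3, hX4]
    have hB : c - 1 ≤ X3 := by omega
    obtain ⟨Y, hY⟩ : ∃ y, b * (c - 1) = y := ⟨_, rfl⟩
    obtain ⟨Z, hZ⟩ : ∃ z, b * X3 = z := ⟨_, rfl⟩
    have hYZ : Y ≤ Z := by rw [← hY, ← hZ]; exact Nat.mul_le_mul_left b hB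
    have hn' : n - 1 = Y + (c - 1) + p := by
      rw [hdecomp, ← hY]; ring
    have hbx : (b + 1) * X3 = Z + X3 := by rw [← hZ]; ring
    rw [hbx]
    omega
  · -- s ≥ 4
    have hz : Nat.choose 2 (s - 1) = 0 := Nat.choose_eq_zero_of_lt (by omega)
    have hpos : 0 < Nat.choose (c-1) (s-1) := Nat.choose_pos (by omega)
    have hB : Nat.choose c s ≤ α * Nat.choose c s := Nat.le_mul_of_pos_left _ hα1
    rw [hz]
    obtain ⟨X1, hX1⟩ : ∃ x, Nat.choose (c-1) s = x := ⟨_, rfl⟩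
    obtain ⟨X2, hX2⟩ : ∃ x, Nat.choose (c-1) (s-1) = x := ⟨_, rfl⟩
    obtain ⟨X3, hX3⟩ : ∃ x, Nat.choose c s = x := ⟨_, rfl⟩
    obtain ⟨X4, hX4⟩ : ∃ x, Nat.choose (p+1) s = x := ⟨_, rfl⟩
    rw [hX1, hX2, hX3] at pascal
    rw [hX2] at hpos
    rw [hX3] at hB
    rw [hX1, hX3, hX4]
    obtain ⟨Z, hZ⟩ : ∃ z, α * X3 = z := ⟨_, rfl⟩
    rw [hZ] at hB ⊢
    omega
end

section
/- Let t and s be integers with t ≥ 2 and 3 ≤ s ≤ 2t. Then C(t,s) + (2t-1)·C(t,s-1) < C(2t,s). -/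
/-- Inequality (1) in the proof of Lemma 8: for integers `t ≥ 2` and `3 ≤ s ≤ 2t`,
`C(t,s) + (2t-1)·C(t,s-1) < C(2t,s)`. -/
theorem clique_ineq_even (t s : ℕ) (ht : 2 ≤ t) (hs : 3 ≤ s) (hs' : s ≤ 2 * t) :
    Nat.choose t s + (2 * t - 1) * Nat.choose t (s - 1) < Nat.choose (2 * t) s := by
  by_cases h : s ≤ t + 1
  · have hv : Nat.choose (2 * t) s
        = ∑ p ∈ Finset.HasAntidiagonal.antidiagonal s, Nat.choose t p.1 * Nat.choose t p.2 := by
      rw [two_mul, Nat.add_choose_eq]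
    have hsub : ({(0, s), (1, s - 1), (s - 1, 1), (s, 0)} : Finset (ℕ × ℕ))
        ⊆ Finset.HasAntidiagonal.antidiagonal s := by
      intro p hp
      simp only [Finset.mem_insert, Finset.mem_singleton] at hp
      rcases hp with rfl | rfl | rfl | rfl <;> simp [Finset.mem_antidiagonal] <;> omega
    have hsum : ∑ p ∈ ({(0, s), (1, s - 1), (s - 1, 1), (s, 0)} : Finset (ℕ × ℕ)),
        Nat.choose t p.1 * Nat.choose t p.2
        = 2 * Nat.choose t s + 2 * t * Nat.choose t (s - 1) := by
      rw [Finset.sum_insert (by simp only [Finset.mem_insert, Finset.mem_singleton, Prod.mk.injEq]; omega), Finset.sum_insert (by simp only [Finset.mem_insert, Finset.mem_singleton, Prod.mk.injEq]; omega),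
        Finset.sum_insert (by simp only [Finset.mem_insert, Finset.mem_singleton, Prod.mk.injEq]; omega), Finset.sum_singleton]
      simp [Nat.choose_one_right, Nat.choose_zero_right]
      ring
    have hle : 2 * Nat.choose t s + 2 * t * Nat.choose t (s - 1) ≤ Nat.choose (2 * t) s := by
      rw [hv, ← hsum]
      exact Finset.sum_le_sum_of_subset hsub
    have hb : 1 ≤ Nat.choose t (s - 1) := Nat.choose_pos (by omega)
    set a := Nat.choose t s
    set b := Nat.choose t (s - 1)
    set m := 2 * t - 1 with hm
    have hm1 : m + 1 = 2 * t := by omega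
    have : 2 * t * b = m * b + b := by rw [← hm1]; ring
    omega
  · have h1 : Nat.choose t s = 0 := Nat.choose_eq_zero_of_lt (by omega)
    have h2 : Nat.choose t (s - 1) = 0 := Nat.choose_eq_zero_of_lt (by omega)
    have h3 : 0 < Nat.choose (2 * t) s := Nat.choose_pos hs'
    simp [h1, h2, h3]
end

section
/- Let t and s be integers with t ≥ 2 and 3 ≤ s ≤ 2t+1. Then C(t+2,s) + 2t·C(t,s-1) < C(2t+1,s). -/
/-- Vandermonde-type lower bound with two terms:
`C(t,k+1) + m·C(t,k) ≤ C(t+m,k+1)`. -/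
private lemma vand1 (t m k : ℕ) :
    Nat.choose t (k + 1) + m * Nat.choose t k ≤ Nat.choose (t + m) (k + 1) := by
  induction m with
  | zero => simp
  | succ m ih =>
    have h0 : Nat.choose t k ≤ Nat.choose (t + m) k :=
      Nat.choose_le_choose k (Nat.le_add_right t m)
    have hp : Nat.choose (t + m + 1) (k + 1)
        = Nat.choose (t + m) k + Nat.choose (t + m) (k + 1) :=
      Nat.choose_succ_succ (t + m) k
    have : t + (m + 1) = t + m + 1 := by omega
    rw [this, hp]
    nlinarith [ih, h0]

/-- Vandermonde-type lower bound with three terms: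
`C(t,k+2) + m·C(t,k+1) + C(m,2)·C(t,k) ≤ C(t+m,k+2)`. -/
private lemma vand2 (t m k : ℕ) :
    Nat.choose t (k + 2) + m * Nat.choose t (k + 1) + Nat.choose m 2 * Nat.choose t k
      ≤ Nat.choose (t + m) (k + 2) := by
  induction m with
  | zero => simp
  | succ m ih =>
    have h1 := vand1 t m k
    have hp : Nat.choose (t + m + 1) (k + 2)
        = Nat.choose (t + m) (k + 1) + Nat.choose (t + m) (k + 2) :=
      Nat.choose_succ_succ (t + m) (k + 1)
    have hm : Nat.choose (m + 1) 2 = Nat.choose m 1 + Nat.choose m 2 :=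
      Nat.choose_succ_succ m 1
    have hm1 : Nat.choose m 1 = m := Nat.choose_one_right m
    have : t + (m + 1) = t + m + 1 := by omega
    rw [this, hp, hm, hm1]
    nlinarith [ih, h1]

/-- `C(t,k+1) ≤ t·C(t,k)`. -/
private lemma choose_succ_le (t k : ℕ) : Nat.choose t (k + 1) ≤ t * Nat.choose t k := by
  calc Nat.choose t (k + 1) ≤ Nat.choose t (k + 1) * (k + 1) :=
        Nat.le_mul_of_pos_right _ k.succ_pos
    _ = Nat.choose t k * (t - k) := Nat.choose_succ_right_eq t k
    _ ≤ Nat.choose t k * t := Nat.mul_le_mul_left _ (Nat.sub_le t k)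
    _ = t * Nat.choose t k := Nat.mul_comm _ _

/-- `2·C(t+1,2) = (t+1)·t`. -/
private lemma two_choose_two (t : ℕ) : 2 * Nat.choose (t + 1) 2 = (t + 1) * t := by
  have := Nat.add_one_mul_choose_eq t 1
  simp [Nat.choose_one_right] at this
  omega

/-- Increment inequality for the induction step. -/
private lemma incr (t a : ℕ) :
    Nat.choose (t + 2) (a + 2) + 2 * Nat.choose t (a + 2) + 2 * (t + 1) * Nat.choose t (a + 1)
      ≤ 2 * Nat.choose (2 * t + 1) (a + 2) + Nat.choose (2 * t + 1) (a + 1) := by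
  have hV2 : Nat.choose t (a + 2) + (t + 1) * Nat.choose t (a + 1)
      + Nat.choose (t + 1) 2 * Nat.choose t a ≤ Nat.choose (2 * t + 1) (a + 2) := by
    have := vand2 t (t + 1) a
    have h : t + (t + 1) = 2 * t + 1 := by omega
    rwa [h] at this
  have hV1 : Nat.choose t (a + 1) + (t + 1) * Nat.choose t a
      ≤ Nat.choose (2 * t + 1) (a + 1) := by
    have := vand1 t (t + 1) a
    have h : t + (t + 1) = 2 * t + 1 := by omega
    rwa [h] at this
  have hP1 : Nat.choose (t + 2) (a + 2)
      = Nat.choose (t + 1) (a + 1) + Nat.choose (t + 1) (a + 2) :=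
    Nat.choose_succ_succ (t + 1) (a + 1)
  have hP2 : Nat.choose (t + 1) (a + 1) = Nat.choose t a + Nat.choose t (a + 1) :=
    Nat.choose_succ_succ t a
  have hP3 : Nat.choose (t + 1) (a + 2) = Nat.choose t (a + 1) + Nat.choose t (a + 2) :=
    Nat.choose_succ_succ t (a + 1)
  have hM1 : Nat.choose t (a + 1) ≤ t * Nat.choose t a := choose_succ_le t a
  have hM2 : Nat.choose t (a + 2) ≤ t * Nat.choose t (a + 1) := choose_succ_le t (a + 1)
  have hT := two_choose_two t
  nlinarith [hV2, hV1, hM1, hM2, Nat.zero_le (Nat.choose t a)]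

/-- Inequality (3) in the proof of Lemma 8: for integers `t ≥ 2` and `3 ≤ s ≤ 2t+1`,
`C(t+2,s) + 2t·C(t,s-1) < C(2t+1,s)`. -/
theorem clique_ineq_odd (t s : ℕ) (ht : 2 ≤ t) (hs : 3 ≤ s) (hs' : s ≤ 2 * t + 1) :
    Nat.choose (t + 2) s + 2 * t * Nat.choose t (s - 1) < Nat.choose (2 * t + 1) s := by
  induction t, ht using Nat.le_induction generalizing s with
  | base => interval_cases s <;> decide
  | succ t ht ih =>
    rcases Nat.lt_or_ge (2 * t + 1) s with h | h
    · -- s = 2t+2 or s = 2t+3 : left side vanishes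
      have h1 : Nat.choose (t + 1 + 2) s = 0 := Nat.choose_eq_zero_of_lt (by omega)
      have h2 : Nat.choose (t + 1) (s - 1) = 0 := Nat.choose_eq_zero_of_lt (by omega)
      have h3 : 0 < Nat.choose (2 * (t + 1) + 1) s := Nat.choose_pos (by omega)
      rw [h1, h2]
      simpa using h3
    · obtain ⟨a, rfl⟩ : ∃ a, s = a + 3 := ⟨s - 3, by omega⟩
      have hIH := ih (a + 3) (by omega) h
      have hD := incr t a
      have e1 : Nat.choose (t + 1 + 2) (a + 3)
          = Nat.choose (t + 2) (a + 2) + Nat.choose (t + 2) (a + 3) :=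
        Nat.choose_succ_succ (t + 2) (a + 2)
      have e2 : Nat.choose (t + 1) (a + 2)
          = Nat.choose t (a + 1) + Nat.choose t (a + 2) :=
        Nat.choose_succ_succ t (a + 1)
      have e3 : Nat.choose (2 * (t + 1) + 1) (a + 3)
          = Nat.choose (2 * t + 1) (a + 1) + 2 * Nat.choose (2 * t + 1) (a + 2)
            + Nat.choose (2 * t + 1) (a + 3) := by
        have p1 : Nat.choose (2 * t + 3) (a + 3)
            = Nat.choose (2 * t + 2) (a + 2) + Nat.choose (2 * t + 2) (a + 3) :=
          Nat.choose_succ_succ (2 * t + 2) (a + 2)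
        have p2 : Nat.choose (2 * t + 2) (a + 2)
            = Nat.choose (2 * t + 1) (a + 1) + Nat.choose (2 * t + 1) (a + 2) :=
          Nat.choose_succ_succ (2 * t + 1) (a + 1)
        have p3 : Nat.choose (2 * t + 2) (a + 3)
            = Nat.choose (2 * t + 1) (a + 2) + Nat.choose (2 * t + 1) (a + 3) :=
          Nat.choose_succ_succ (2 * t + 1) (a + 2)
        have h23 : 2 * (t + 1) + 1 = 2 * t + 3 := by omega
        rw [h23, p1, p2, p3]; ring
      have es : a + 3 - 1 = a + 2 := rfl
      rw [es] at hIH ⊢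
      rw [e1, e2, e3]
      have hIH' : Nat.choose (t + 2) (a + 3) + 2 * t * Nat.choose t (a + 2)
          < Nat.choose (2 * t + 1) (a + 3) := hIH
      nlinarith [hIH', hD]
end

section
/- Let n > c ≥ 4 and c ≥ s ≥ 3 be integers, write n - 1 = α(c-1) + p with α = ⌊(n-1)/(c-1)⌋ and 0 ≤ p ≤ c-2. Then C(c+1-⌊c/2⌋,s) + (n-c-1+⌊c/2⌋)·C(⌊c/2⌋,s-1) < α·C(c,s) + C(p+1,s). -/
open Finset

-- L1: C(j+d, s+1) ≤ d·C(j+d, s) + C(j, s+1)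
lemma L1 (s : ℕ) : ∀ d j : ℕ, (j + d).choose (s+1) ≤ d * (j + d).choose s + j.choose (s+1) := by
  intro d
  induction d with
  | zero => simp
  | succ d ih =>
    intro j
    have h : (j + (d+1)).choose (s+1) = (j+d).choose s + (j+d).choose (s+1) := by
      have : j + (d+1) = (j+d) + 1 := by ring
      rw [this, Nat.choose_succ_succ]
    rw [h]
    have h2 : (j+d).choose s ≤ (j+(d+1)).choose s :=
      Nat.choose_le_choose _ (by omega)
    have := ih j
    calc (j+d).choose s + (j+d).choose (s+1)
        ≤ (j+d).choose s + (d * (j+d).choose s + j.choose (s+1)) := by omega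
      _ = (d+1) * (j+d).choose s + j.choose (s+1) := by ring
      _ ≤ (d+1) * (j+(d+1)).choose s + j.choose (s+1) := by
          have := Nat.mul_le_mul_left (d+1) h2; omega

-- L2: d·C(k,s) + C(k,s+1) ≤ C(k+d, s+1)
lemma L2 (s k : ℕ) : ∀ d : ℕ, d * k.choose s + k.choose (s+1) ≤ (k + d).choose (s+1) := by
  intro d
  induction d with
  | zero => simp
  | succ d ih =>
    have h : (k + (d+1)).choose (s+1) = (k+d).choose s + (k+d).choose (s+1) := by
      have : k + (d+1) = (k+d) + 1 := by ring
      rw [this, Nat.choose_succ_succ]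
    have h2 : k.choose s ≤ (k+d).choose s := Nat.choose_le_choose _ (by omega)
    rw [h]
    have : (d+1) * k.choose s = d * k.choose s + k.choose s := by ring
    omega

-- L3: strict monotonicity
lemma L3 (a b s : ℕ) (h1 : 1 ≤ s) (hsb : s ≤ b) (hab : a < b) : a.choose s < b.choose s := by
  obtain ⟨b', rfl⟩ : ∃ b', b = b' + 1 := ⟨b - 1, by omega⟩
  have h2 : a.choose s ≤ b'.choose s := Nat.choose_le_choose _ (by omega)
  obtain ⟨s', rfl⟩ : ∃ s', s = s' + 1 := ⟨s - 1, by omega⟩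
  have h3 : 0 < b'.choose s' := Nat.choose_pos (by omega)
  rw [Nat.choose_succ_succ]
  simp only [Nat.succ_eq_add_one] at *
  omega

-- Vandermonde 4-term bound
lemma V (m k t : ℕ) :
    m.choose (t+3) + m * k.choose (t+2) + k * m.choose (t+2) + k.choose (t+3) ≤ (m + k).choose (t+3) := by
  rw [Nat.add_choose_eq]
  set s := t + 3 with hsdef
  have hs : 3 ≤ s := by omega
  have hs1 : s - 1 = t + 2 := by omega
  rw [← hs1]
  have hsub : ({(0,s),(1,s-1),(s-1,1),(s,0)} : Finset (ℕ×ℕ)) ⊆ Finset.HasAntidiagonal.antidiagonal s := by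
    intro x hx
    simp only [Finset.mem_insert, Finset.mem_singleton] at hx
    rcases hx with rfl|rfl|rfl|rfl <;> simp [Finset.HasAntidiagonal.mem_antidiagonal] <;> omega
  refine le_trans ?_ (Finset.sum_le_sum_of_subset hsub)
  have h1 : ((0:ℕ),s) ∉ ({(1,s-1),(s-1,1),(s,0)} : Finset (ℕ×ℕ)) := by
    simp [Prod.ext_iff]; try omega
  have h2 : ((1:ℕ),s-1) ∉ ({(s-1,1),(s,0)} : Finset (ℕ×ℕ)) := by
    simp [Prod.ext_iff]; try omega
  have h3 : ((s-1:ℕ),1) ∉ ({(s,0)} : Finset (ℕ×ℕ)) := by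
    simp [Prod.ext_iff]; try omega
  rw [Finset.sum_insert h1, Finset.sum_insert h2, Finset.sum_insert h3, Finset.sum_singleton]
  simp [Nat.choose_one_right]
  ring_nf
  omega

/-- Second part of the proof of Lemma 8: for `n > c ≥ 4`, `c ≥ s ≥ 3`, writing
`n - 1 = α(c-1) + p` with `α = ⌊(n-1)/(c-1)⌋` and `0 ≤ p ≤ c-2`, we have
`f_s(n,c,⌊c/2⌋) = C(c+1-⌊c/2⌋,s) + (n-c-1+⌊c/2⌋)·C(⌊c/2⌋,s-1) < α·C(c,s) + C(p+1,s) = h_s(n,c)`. -/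
theorem fhalf_lt_h (n c s α p : ℕ) (hc : 4 ≤ c) (hnc : c < n) (hs : 3 ≤ s) (hsc : s ≤ c)
    (hα : α = (n - 1) / (c - 1)) (hdecomp : n - 1 = α * (c - 1) + p) (hp : p ≤ c - 2) :
    Nat.choose (c + 1 - c / 2) s + (n - c - 1 + c / 2) * Nat.choose (c / 2) (s - 1) <
      α * Nat.choose c s + Nat.choose (p + 1) s := by
  obtain ⟨s', rfl⟩ : ∃ s', s = s' + 3 := ⟨s - 3, by omega⟩
  obtain ⟨k', hkk⟩ : ∃ k', c / 2 = k' + 2 := ⟨c / 2 - 2, by omega⟩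
  obtain ⟨m, rfl⟩ : ∃ m, c = m + (k' + 2) := ⟨c - (k' + 2), by omega⟩
  rw [hkk]
  have hkm : k' + 2 ≤ m := by omega
  have hm3 : m ≤ k' + 3 := by omega
  obtain ⟨a, rfl⟩ : ∃ a, α = a + 1 := by
    rcases Nat.eq_zero_or_pos α with h | h
    · subst h; simp at hdecomp; omega
    · exact ⟨α - 1, by omega⟩
  have hd2 : n - 1 = a * (m + k' + 1) + (m + k' + 1) + p := by
    rw [show m + (k' + 2) - 1 = m + k' + 1 by omega] at hdecomp
    rw [hdecomp]; ring
  set B := a * (m + k' + 1) with hBdef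
  have e1 : m + (k' + 2) + 1 - (k' + 2) = m + 1 := by omega
  have e2 : s' + 3 - 1 = s' + 2 := rfl
  rw [e1, e2]
  have hBn : n - (m + (k' + 2)) - 1 + (k' + 2) = B + (p + k' + 1) := by omega
  rw [hBn, Nat.add_mul]
  set X := (k' + 2).choose (s' + 2) with hXdef
  set C := (m + (k' + 2)).choose (s' + 3) with hCdef
  have hV := V m (k' + 2) s'
  have hmono : X ≤ m.choose (s' + 2) := Nat.choose_le_choose _ hkm
  have hA : (m + k' + 1) * X ≤ C := by
    have hr : (m + k' + 1) * X + X = m * X + (k' + 2) * X := by ring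
    have h2 : (k' + 2) * X ≤ (k' + 2) * m.choose (s' + 2) := Nat.mul_le_mul_left _ hmono
    have : m + (k' + 2) = m + k' + 2 := by ring
    linarith
  have hB : B * X ≤ a * C := by
    rw [hBdef, mul_assoc]
    exact Nat.mul_le_mul_left a hA
  have hCineq : (p + k' + 1) * X + (k' + 2).choose (s' + 3) ≤
      (2 * k' + 2) * X + (p + 1).choose (s' + 3) := by
    rcases le_or_gt (p + 1) (k' + 2) with h | h
    · have hL := L1 (s' + 2) ((k' + 2) - (p + 1)) (p + 1)
      rw [show p + 1 + ((k' + 2) - (p + 1)) = k' + 2 by omega] at hL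
      have hr : (2 * k' + 2) * X = (p + k' + 1) * X + ((k' + 2) - (p + 1)) * X := by
        rw [← Nat.add_mul]; congr 1; omega
      linarith
    · have hL := L2 (s' + 2) (k' + 2) (p + 1 - (k' + 2))
      rw [show (k' + 2) + (p + 1 - (k' + 2)) = p + 1 by omega] at hL
      have hr : (p + k' + 1) * X = (2 * k' + 2) * X + (p + 1 - (k' + 2)) * X := by
        rw [← Nat.add_mul]; congr 1; omega
      linarith
  have hpas : (m + 1).choose (s' + 3) = m.choose (s' + 2) + m.choose (s' + 3) :=
    Nat.choose_succ_succ m (s' + 2)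
  have hBs : (m + 1).choose (s' + 3) + (2 * k' + 3) * X + (k' + 2).choose (s' + 3) ≤ C := by
    have h1 : (k' + 2) * X ≤ m * X := Nat.mul_le_mul_right _ hkm
    have h2 : (k' + 1) * X ≤ (k' + 1) * m.choose (s' + 2) := Nat.mul_le_mul_left _ hmono
    have hr1 : (k' + 2) * m.choose (s' + 2) =
        (k' + 1) * m.choose (s' + 2) + m.choose (s' + 2) := by ring
    have hr2 : (k' + 2) * X + (k' + 1) * X = (2 * k' + 3) * X := by ring
    linarith
  rcases Nat.lt_or_ge (k' + 2) (s' + 2) with hcase | hcase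
  · have hX0 : X = 0 := Nat.choose_eq_zero_of_lt hcase
    rw [hX0]
    simp only [Nat.mul_zero, Nat.add_zero]
    have h1 : (m + 1).choose (s' + 3) < C := by
      rw [hCdef]
      exact L3 (m + 1) (m + (k' + 2)) (s' + 3) (by omega) (by omega) (by omega)
    have h2 : C ≤ (a + 1) * C := Nat.le_mul_of_pos_left C (by omega)
    omega
  · have hX1 : 1 ≤ X := Nat.choose_pos (by omega)
    have hrhs : (a + 1) * C = a * C + C := by ring
    linarith
end

section
/- Let s ≥ 3 and c ≥ 3 be integers and let p₁, p₂ be integers with 0 ≤ p₁ ≤ c-2, 0 ≤ p₂ ≤ c-2 and c-1 ≤ p₁+p₂. Then C(p₁+1,s) + C(p₂+1,s) ≤ C(c,s) + C(p₁+p₂-c+2,s). -/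
lemma choose_step (s a b : ℕ) (h : a ≤ b) :
    Nat.choose (a + 1) (s + 1) + Nat.choose b (s + 1) ≤
      Nat.choose a (s + 1) + Nat.choose (b + 1) (s + 1) := by
  rw [Nat.choose_succ_succ, Nat.choose_succ_succ b s]
  have := Nat.choose_le_choose s h
  simp only [Nat.succ_eq_add_one]
  omega

lemma choose_main (s : ℕ) : ∀ k a b, a + k ≤ b + 1 →
    Nat.choose (a + k) (s + 1) + Nat.choose b (s + 1) ≤
      Nat.choose a (s + 1) + Nat.choose (b + k) (s + 1) := by
  intro k
  induction k with
  | zero => intro a b _; simp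
  | succ k ih =>
    intro a b h
    have h1 : a + k ≤ b := by omega
    calc Nat.choose (a + k + 1) (s + 1) + Nat.choose b (s + 1)
        ≤ Nat.choose (a + k) (s + 1) + Nat.choose (b + 1) (s + 1) :=
          choose_step s (a + k) b h1
      _ ≤ Nat.choose a (s + 1) + Nat.choose (b + 1 + k) (s + 1) :=
          ih a (b + 1) (by omega)
      _ = Nat.choose a (s + 1) + Nat.choose (b + (k + 1)) (s + 1) := by
          ring_nf

lemma choose_ineq_aux (s c p₁ p₂ : ℕ) (hc : 3 ≤ c)
    (hp₁ : p₁ ≤ c - 2) (hp₂ : p₂ ≤ c - 2) (hsum : c - 1 ≤ p₁ + p₂)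
    (hle : p₁ ≤ p₂) :
    Nat.choose (p₁ + 1) (s + 1) + Nat.choose (p₂ + 1) (s + 1) ≤
      Nat.choose c (s + 1) + Nat.choose (p₁ + p₂ + 2 - c) (s + 1) := by
  set x := p₁ + p₂ + 2 - c with hx
  set k := c - p₂ - 1 with hk
  have h1 : x + k = p₁ + 1 := by omega
  have h2 : p₂ + 1 + k = c := by omega
  have := choose_main s k x (p₂ + 1) (by omega)
  rw [h1, h2] at this
  omega

/-- Second case of the binomial inequality used in the proof of Theorem 5:
for `s ≥ 3`, `c ≥ 3`, `0 ≤ p₁, p₂ ≤ c-2` and `c-1 ≤ p₁+p₂`,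
`C(p₁+1,s) + C(p₂+1,s) ≤ C(c,s) + C(p₁+p₂-c+2,s)`. -/
theorem choose_ineq_second_case (s c p₁ p₂ : ℕ) (hs : 3 ≤ s) (hc : 3 ≤ c)
    (hp₁ : p₁ ≤ c - 2) (hp₂ : p₂ ≤ c - 2) (hsum : c - 1 ≤ p₁ + p₂) :
    Nat.choose (p₁ + 1) s + Nat.choose (p₂ + 1) s ≤
      Nat.choose c s + Nat.choose (p₁ + p₂ + 2 - c) s := by
  obtain ⟨t, rfl⟩ : ∃ t, s = t + 1 := ⟨s - 1, by omega⟩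
  rcases le_total p₁ p₂ with h | h
  · exact choose_ineq_aux t c p₁ p₂ hc hp₁ hp₂ hsum h
  · have := choose_ineq_aux t c p₂ p₁ hc hp₂ hp₁ (by omega) h
    have e : p₂ + p₁ + 2 - c = p₁ + p₂ + 2 - c := by omega
    rw [e] at this
    omega
end

section
/- Let s ≥ 3 and k ≥ 4 be integers and let q₁, q₂ be integers with 0 ≤ q₁ ≤ k-3, 0 ≤ q₂ ≤ k-3 and k-2 ≤ q₁+q₂. Then C(q₁+2,s) + C(q₂+2,s) ≤ C(k,s) + C(q₁+q₂-k+4,s). -/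
/-- Convexity shift lemma for binomial coefficients. -/
lemma choose_conv (s : ℕ) : ∀ t a b : ℕ, a ≤ b →
    Nat.choose (a + t) (s + 1) + Nat.choose b (s + 1) ≤
      Nat.choose a (s + 1) + Nat.choose (b + t) (s + 1) := by
  intro t
  induction t with
  | zero => intro a b _; simp
  | succ t ih =>
    intro a b hab
    have h1 : a + (t + 1) = (a + t) + 1 := by omega
    have h2 : b + (t + 1) = (b + t) + 1 := by omega
    rw [h1, h2, Nat.choose_succ_succ' (a + t) s, Nat.choose_succ_succ' (b + t) s]
    have h3 : Nat.choose (a + t) s ≤ Nat.choose (b + t) s :=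
      Nat.choose_le_choose s (by omega)
    have := ih a b hab
    omega

lemma main_aux (s k q₁ q₂ : ℕ) (hs : 3 ≤ s) (hk : 4 ≤ k)
    (hq₁ : q₁ ≤ k - 3) (hq₂ : q₂ ≤ k - 3) (hsum : k - 2 ≤ q₁ + q₂) (hle : q₁ ≤ q₂) :
    Nat.choose (q₁ + 2) s + Nat.choose (q₂ + 2) s ≤
      Nat.choose k s + Nat.choose (q₁ + q₂ + 4 - k) s := by
  obtain ⟨s', rfl⟩ : ∃ s', s = s' + 1 := ⟨s - 1, by omega⟩
  have h1 : (q₁ + q₂ + 4 - k) + (k - (q₂ + 2)) = q₁ + 2 := by omega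
  have h2 : (q₂ + 2) + (k - (q₂ + 2)) = k := by omega
  have h3 : q₁ + q₂ + 4 - k ≤ q₂ + 2 := by omega
  have := choose_conv s' (k - (q₂ + 2)) (q₁ + q₂ + 4 - k) (q₂ + 2) h3
  rw [h1, h2] at this
  omega

/-- Second case of the binomial inequality used in Case 1 of the proof of Theorem 6:
for `s ≥ 3`, `k ≥ 4`, `0 ≤ q₁, q₂ ≤ k-3` and `k-2 ≤ q₁+q₂`,
`C(q₁+2,s) + C(q₂+2,s) ≤ C(k,s) + C(q₁+q₂-k+4,s)`. -/
theorem choose_ineq_second_case_two (s k q₁ q₂ : ℕ) (hs : 3 ≤ s) (hk : 4 ≤ k)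
    (hq₁ : q₁ ≤ k - 3) (hq₂ : q₂ ≤ k - 3) (hsum : k - 2 ≤ q₁ + q₂) :
    Nat.choose (q₁ + 2) s + Nat.choose (q₂ + 2) s ≤
      Nat.choose k s + Nat.choose (q₁ + q₂ + 4 - k) s := by
  rcases le_total q₁ q₂ with h | h
  · exact main_aux s k q₁ q₂ hs hk hq₁ hq₂ hsum h
  · have := main_aux s k q₂ q₁ hs hk hq₂ hq₁ (by omega) h
    have e : q₂ + q₁ + 4 - k = q₁ + q₂ + 4 - k := by omega
    rw [e] at this
    omega
end
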